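/- Operator bound from Fourier control: let W : ℝ^d → ℝ with ŵ ∈ L¹(ℝ^d), and let T be a self-adjoint trace-class operator on a bipartite Hilbert space L²(ℝ^d) ⊗ L²(ℝ^d) such that |tr[(A ⊗ B) T]| ≤ ε for all operators 0 ≤ A, B ≤ 1. Then |tr[W(x−y) T]| ≤ C ε ∫|ŵ(p)| dp for a universal constant C (e.g. C = 8), where W(x−y) acts as a multiplication operator. -/

import Mathlib

open MeasureTheory Real
open scoped RealInnerProductSpace

lemma cos_inner_kernel_bound {d : ℕ}
    (k : EuclideanSpace ℝ (Fin d) × EuclideanSpace ℝ (Fin d) → ℝ)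
    (hk : Integrable k) (ε : ℝ)
    (htest : ∀ f g : EuclideanSpace ℝ (Fin d) → ℝ, Measurable f → Measurable g →
      (∀ x, 0 ≤ f x) → (∀ x, f x ≤ 1) → (∀ x, 0 ≤ g x) → (∀ x, g x ≤ 1) →
      |∫ z, f z.1 * g z.2 * k z| ≤ ε)
    (p : EuclideanSpace ℝ (Fin d)) :
    |∫ z, Real.cos ⟪p, z.1 - z.2⟫ * k z| ≤ 8 * ε := by
  set cp : EuclideanSpace ℝ (Fin d) → ℝ := fun x => max (Real.cos ⟪p, x⟫) 0 with hcp
  set cm : EuclideanSpace ℝ (Fin d) → ℝ := fun x => max (-Real.cos ⟪p, x⟫) 0 with hcm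
  set sp : EuclideanSpace ℝ (Fin d) → ℝ := fun x => max (Real.sin ⟪p, x⟫) 0 with hsp
  set sm : EuclideanSpace ℝ (Fin d) → ℝ := fun x => max (-Real.sin ⟪p, x⟫) 0 with hsm
  have hcont : Continuous fun x : EuclideanSpace ℝ (Fin d) => ⟪p, x⟫ := continuous_const.inner continuous_id
  have mcp : Measurable cp := ((Real.continuous_cos.comp hcont).max continuous_const).measurable
  have mcm : Measurable cm := (((Real.continuous_cos.comp hcont).neg).max continuous_const).measurable
  have msp : Measurable sp := ((Real.continuous_sin.comp hcont).max continuous_const).measurable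
  have msm : Measurable sm := (((Real.continuous_sin.comp hcont).neg).max continuous_const).measurable
  have hmax : ∀ t : ℝ, max t 0 - max (-t) 0 = t := by
    intro t
    rcases le_total 0 t with h | h
    · simp [max_eq_left h, max_eq_right (neg_nonpos.mpr h)]
    · simp [max_eq_right h, max_eq_left (neg_nonneg.mpr h)]
  have hb : ∀ f : EuclideanSpace ℝ (Fin d) → ℝ, (∀ x, 0 ≤ f x) → (∀ x, f x ≤ 1) → ∀ g : EuclideanSpace ℝ (Fin d) → ℝ,
      (∀ x, 0 ≤ g x) → (∀ x, g x ≤ 1) → Measurable f → Measurable g →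
      Integrable (fun z : EuclideanSpace ℝ (Fin d) × EuclideanSpace ℝ (Fin d) => f z.1 * g z.2 * k z) := by
    intro f hf0 hf1 g hg0 hg1 mf mg
    refine hk.norm.mono' (((((mf.comp measurable_fst).mul
      (mg.comp measurable_snd)).aestronglyMeasurable).mul hk.1)) (ae_of_all _ fun z => ?_)
    have hfz : |f z.1| ≤ 1 := abs_le.mpr ⟨by linarith [hf0 z.1], hf1 z.1⟩
    have hgz : |g z.2| ≤ 1 := abs_le.mpr ⟨by linarith [hg0 z.2], hg1 z.2⟩
    rw [Real.norm_eq_abs, Real.norm_eq_abs, abs_mul, abs_mul]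
    have hfg : |f z.1| * |g z.2| ≤ 1 := mul_le_one₀ hfz (abs_nonneg _) hgz
    nlinarith [abs_nonneg (k z)]
  have bnd : ∀ f : EuclideanSpace ℝ (Fin d) → ℝ, Measurable f → (∀ x, 0 ≤ f x) → (∀ x, f x ≤ 1) →
      ∀ g : EuclideanSpace ℝ (Fin d) → ℝ, Measurable g → (∀ x, 0 ≤ g x) → (∀ x, g x ≤ 1) →
      |∫ z, f z.1 * g z.2 * k z| ≤ ε := fun f mf h0 h1 g mg g0 g1 =>
    htest f g mf mg h0 h1 g0 g1
  have cp0 : ∀ x, 0 ≤ cp x := fun x => le_max_right _ _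
  have cp1 : ∀ x, cp x ≤ 1 := fun x => max_le (Real.cos_le_one _) zero_le_one
  have cm0 : ∀ x, 0 ≤ cm x := fun x => le_max_right _ _
  have cm1 : ∀ x, cm x ≤ 1 := fun x => max_le (by simpa using neg_le_neg (Real.neg_one_le_cos _) |>.trans_eq (neg_neg 1)) zero_le_one
  have sp0 : ∀ x, 0 ≤ sp x := fun x => le_max_right _ _
  have sp1 : ∀ x, sp x ≤ 1 := fun x => max_le (Real.sin_le_one _) zero_le_one
  have sm0 : ∀ x, 0 ≤ sm x := fun x => le_max_right _ _
  have sm1 : ∀ x, sm x ≤ 1 := fun x => max_le (by simpa using neg_le_neg (Real.neg_one_le_sin _) |>.trans_eq (neg_neg 1)) zero_le_one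
  have i1 := hb cp cp0 cp1 cp cp0 cp1 mcp mcp
  have i2 := hb cm cm0 cm1 cm cm0 cm1 mcm mcm
  have i3 := hb sp sp0 sp1 sp sp0 sp1 msp msp
  have i4 := hb sm sm0 sm1 sm sm0 sm1 msm msm
  have i5 := hb cp cp0 cp1 cm cm0 cm1 mcp mcm
  have i6 := hb cm cm0 cm1 cp cp0 cp1 mcm mcp
  have i7 := hb sp sp0 sp1 sm sm0 sm1 msp msm
  have i8 := hb sm sm0 sm1 sp sp0 sp1 msm msp
  have hid : (fun z : EuclideanSpace ℝ (Fin d) × EuclideanSpace ℝ (Fin d) => Real.cos ⟪p, z.1 - z.2⟫ * k z) = fun z =>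
      (cp z.1 * cp z.2 * k z + cm z.1 * cm z.2 * k z + sp z.1 * sp z.2 * k z
        + sm z.1 * sm z.2 * k z)
      - (cp z.1 * cm z.2 * k z + cm z.1 * cp z.2 * k z + sp z.1 * sm z.2 * k z
        + sm z.1 * sp z.2 * k z) := by
    funext z
    have hinner : ⟪p, z.1 - z.2⟫ = ⟪p, z.1⟫ - ⟪p, z.2⟫ := inner_sub_right _ _ _
    rw [hinner, Real.cos_sub]
    have e1 : cp z.1 - cm z.1 = Real.cos ⟪p, z.1⟫ := hmax _
    have e2 : cp z.2 - cm z.2 = Real.cos ⟪p, z.2⟫ := hmax _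
    have e3 : sp z.1 - sm z.1 = Real.sin ⟪p, z.1⟫ := hmax _
    have e4 : sp z.2 - sm z.2 = Real.sin ⟪p, z.2⟫ := hmax _
    linear_combination -(k z) * ((cp z.2 - cm z.2) * e1 + Real.cos ⟪p, z.1⟫ * e2
      + (sp z.2 - sm z.2) * e3 + Real.sin ⟪p, z.1⟫ * e4)
  have i12 : Integrable (fun z : EuclideanSpace ℝ (Fin d) × EuclideanSpace ℝ (Fin d) =>
      cp z.1 * cp z.2 * k z + cm z.1 * cm z.2 * k z) := i1.add i2
  have i123 : Integrable (fun z : EuclideanSpace ℝ (Fin d) × EuclideanSpace ℝ (Fin d) =>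
      cp z.1 * cp z.2 * k z + cm z.1 * cm z.2 * k z + sp z.1 * sp z.2 * k z) := i12.add i3
  have i1234 : Integrable (fun z : EuclideanSpace ℝ (Fin d) × EuclideanSpace ℝ (Fin d) =>
      cp z.1 * cp z.2 * k z + cm z.1 * cm z.2 * k z + sp z.1 * sp z.2 * k z
        + sm z.1 * sm z.2 * k z) := i123.add i4
  have i56 : Integrable (fun z : EuclideanSpace ℝ (Fin d) × EuclideanSpace ℝ (Fin d) =>
      cp z.1 * cm z.2 * k z + cm z.1 * cp z.2 * k z) := i5.add i6
  have i567 : Integrable (fun z : EuclideanSpace ℝ (Fin d) × EuclideanSpace ℝ (Fin d) =>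
      cp z.1 * cm z.2 * k z + cm z.1 * cp z.2 * k z + sp z.1 * sm z.2 * k z) := i56.add i7
  have i5678 : Integrable (fun z : EuclideanSpace ℝ (Fin d) × EuclideanSpace ℝ (Fin d) =>
      cp z.1 * cm z.2 * k z + cm z.1 * cp z.2 * k z + sp z.1 * sm z.2 * k z
        + sm z.1 * sp z.2 * k z) := i567.add i8
  rw [hid]
  rw [integral_sub i1234 i5678, integral_add i123 i4, integral_add i12 i3, integral_add i1 i2,
    integral_add i567 i8, integral_add i56 i7, integral_add i5 i6]
  have b1 := abs_le.mp (bnd cp mcp cp0 cp1 cp mcp cp0 cp1)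
  have b2 := abs_le.mp (bnd cm mcm cm0 cm1 cm mcm cm0 cm1)
  have b3 := abs_le.mp (bnd sp msp sp0 sp1 sp msp sp0 sp1)
  have b4 := abs_le.mp (bnd sm msm sm0 sm1 sm msm sm0 sm1)
  have b5 := abs_le.mp (bnd cp mcp cp0 cp1 cm mcm cm0 cm1)
  have b6 := abs_le.mp (bnd cm mcm cm0 cm1 cp mcp cp0 cp1)
  have b7 := abs_le.mp (bnd sp msp sp0 sp1 sm msm sm0 sm1)
  have b8 := abs_le.mp (bnd sm msm sm0 sm1 sp msp sp0 sp1)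
  rw [abs_le]
  constructor <;> [nlinarith [b1.1,b2.1,b3.1,b4.1,b5.2,b6.2,b7.2,b8.2]; nlinarith [b1.2,b2.2,b3.2,b4.2,b5.1,b6.1,b7.1,b8.1]]
/-- Operator bound from Fourier control. The self-adjoint trace-class operator `T` is
represented by its real integral kernel density `k` on `ℝ^d × ℝ^d`, so that
`tr[(A ⊗ B) T] = ∫ f(x) g(y) k(x,y)` for multiplication operators `A = f`, `B = g`, and
`tr[W(x-y) T] = ∫ W(x-y) k(x,y)`. -/
theorem operator_bound_from_fourier_control {d : ℕ}
    (W : EuclideanSpace ℝ (Fin d) → ℝ)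
    (wF : EuclideanSpace ℝ (Fin d) → ℝ) (hwFint : Integrable wF)
    (hW : ∀ z, W z = ∫ p, wF p * Real.cos ⟪p, z⟫)
    (k : EuclideanSpace ℝ (Fin d) × EuclideanSpace ℝ (Fin d) → ℝ)
    (hk : Integrable k)
    (ε : ℝ) (hε : 0 ≤ ε)
    (htest : ∀ f g : EuclideanSpace ℝ (Fin d) → ℝ, Measurable f → Measurable g →
      (∀ x, 0 ≤ f x) → (∀ x, f x ≤ 1) → (∀ x, 0 ≤ g x) → (∀ x, g x ≤ 1) →
      |∫ z, f z.1 * g z.2 * k z| ≤ ε) :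
    |∫ z, W (z.1 - z.2) * k z| ≤ 8 * ε * ∫ p, |wF p| := by
  have key : ∀ p : EuclideanSpace ℝ (Fin d),
      |∫ z, Real.cos ⟪p, z.1 - z.2⟫ * k z| ≤ 8 * ε :=
    cos_inner_kernel_bound k hk ε htest
  -- integrability of the full integrand on the product
  have hcontcos : Continuous fun q : (EuclideanSpace ℝ (Fin d) × EuclideanSpace ℝ (Fin d))
      × EuclideanSpace ℝ (Fin d) => Real.cos ⟪q.2, q.1.1 - q.1.2⟫ :=
    Real.continuous_cos.comp (continuous_snd.inner (continuous_fst.fst.sub continuous_fst.snd))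
  have hmeas : AEStronglyMeasurable
      (fun q : (EuclideanSpace ℝ (Fin d) × EuclideanSpace ℝ (Fin d))
        × EuclideanSpace ℝ (Fin d) => wF q.2 * Real.cos ⟪q.2, q.1.1 - q.1.2⟫ * k q.1)
      (volume.prod volume) := by
    have h1 : AEStronglyMeasurable (fun q : (EuclideanSpace ℝ (Fin d) × EuclideanSpace ℝ (Fin d))
        × EuclideanSpace ℝ (Fin d) => wF q.2) (volume.prod volume) := hwFint.1.comp_snd
    have h2 : AEStronglyMeasurable (fun q : (EuclideanSpace ℝ (Fin d) × EuclideanSpace ℝ (Fin d))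
        × EuclideanSpace ℝ (Fin d) => k q.1) (volume.prod volume) := hk.1.comp_fst
    exact ((h1.mul hcontcos.aestronglyMeasurable).mul h2)
  have hbnd : Integrable
      (fun q : (EuclideanSpace ℝ (Fin d) × EuclideanSpace ℝ (Fin d))
        × EuclideanSpace ℝ (Fin d) => |k q.1| * |wF q.2|) (volume.prod volume) :=
    hk.abs.mul_prod hwFint.abs
  have hint : Integrable
      (Function.uncurry fun (z : EuclideanSpace ℝ (Fin d) × EuclideanSpace ℝ (Fin d))
        (p : EuclideanSpace ℝ (Fin d)) => wF p * Real.cos ⟪p, z.1 - z.2⟫ * k z)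
      (volume.prod volume) := by
    refine hbnd.mono' hmeas (ae_of_all _ fun q => ?_)
    simp only [Function.uncurry]
    rw [Real.norm_eq_abs, abs_mul, abs_mul]
    have hc : |Real.cos ⟪q.2, q.1.1 - q.1.2⟫| ≤ 1 := Real.abs_cos_le_one _
    have h1 : |wF q.2| * |Real.cos ⟪q.2, q.1.1 - q.1.2⟫| ≤ |wF q.2| :=
      mul_le_of_le_one_right (abs_nonneg _) hc
    nlinarith [abs_nonneg (k q.1), abs_nonneg (wF q.2)]
  -- rewrite the integral and swap
  have step1 : ∫ z, W (z.1 - z.2) * k z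
      = ∫ z : EuclideanSpace ℝ (Fin d) × EuclideanSpace ℝ (Fin d),
          ∫ p, wF p * Real.cos ⟪p, z.1 - z.2⟫ * k z := by
    refine integral_congr_ae (ae_of_all _ fun z => ?_)
    show W (z.1 - z.2) * k z = _
    rw [hW]
    exact (integral_mul_const (k z) _).symm
  have step2 : (∫ z : EuclideanSpace ℝ (Fin d) × EuclideanSpace ℝ (Fin d),
        ∫ p, wF p * Real.cos ⟪p, z.1 - z.2⟫ * k z)
      = ∫ p, ∫ z : EuclideanSpace ℝ (Fin d) × EuclideanSpace ℝ (Fin d),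
          wF p * Real.cos ⟪p, z.1 - z.2⟫ * k z :=
    integral_integral_swap hint
  have step3 : ∀ p : EuclideanSpace ℝ (Fin d),
      (∫ z : EuclideanSpace ℝ (Fin d) × EuclideanSpace ℝ (Fin d),
        wF p * Real.cos ⟪p, z.1 - z.2⟫ * k z)
      = wF p * ∫ z : EuclideanSpace ℝ (Fin d) × EuclideanSpace ℝ (Fin d),
          Real.cos ⟪p, z.1 - z.2⟫ * k z := by
    intro p
    simp_rw [mul_assoc]
    exact MeasureTheory.integral_const_mul _ _
  rw [step1, step2]
  simp_rw [step3]
  calc |∫ p, wF p * ∫ z : EuclideanSpace ℝ (Fin d) × EuclideanSpace ℝ (Fin d),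
          Real.cos ⟪p, z.1 - z.2⟫ * k z|
      ≤ ∫ p, |wF p * ∫ z : EuclideanSpace ℝ (Fin d) × EuclideanSpace ℝ (Fin d),
          Real.cos ⟪p, z.1 - z.2⟫ * k z| := by
        simpa [Real.norm_eq_abs, abs_mul] using norm_integral_le_integral_norm
          (fun p => wF p * ∫ z : EuclideanSpace ℝ (Fin d) × EuclideanSpace ℝ (Fin d),
            Real.cos ⟪p, z.1 - z.2⟫ * k z)
    _ ≤ ∫ p, |wF p| * (8 * ε) := by
        refine integral_mono_of_nonneg (ae_of_all _ fun p => abs_nonneg _)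
          (hwFint.abs.mul_const _) (ae_of_all _ fun p => ?_)
        have h := mul_le_mul_of_nonneg_left (key p) (abs_nonneg (wF p))
        simpa [abs_mul] using h
    _ = 8 * ε * ∫ p, |wF p| := by
        rw [integral_mul_const]; ring
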